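/- Let {x^k} be a sequence in ℝⁿ with x^{k+1} = x^k + α_k d^k, where d^k is the unique global minimizer of d ↦ Q(x^k,d), t^k = Q(x^k,d^k), α_k ∈ [ᾱ, 1] for a fixed ᾱ > 0, and F_j(x^{k+1}) ≤ F_j(x^k) + β α_k t^k for every j and every k, for a fixed β ∈ (0,1). If each f_j is σ-strongly convex (σ > 0) and each F_j is bounded below on the level set M = {x : F_j(x) ≤ F_j(x^0) for all j}, then Σ_{k=0}^∞ ‖d^k‖² < ∞ and in particular d^k → 0 as k → ∞. -/

import Mathlib

open Filter Topology Finset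
open scoped RealInnerProductSpace

noncomputable section

/-- One-sided directional derivative: `c = F'(x; d) = lim_{α→0⁺} (F(x+αd) − F(x))/α`. -/
def HasDirDeriv {n : ℕ} (F : EuclideanSpace ℝ (Fin n) → ℝ)
    (x d : EuclideanSpace ℝ (Fin n)) (c : ℝ) : Prop :=
  Filter.Tendsto (fun α : ℝ => (F (x + α • d) - F x) / α) (nhdsWithin 0 (Set.Ioi 0)) (nhds c)

/-- Subdifferential of a convex function: `∂h(x) = {ξ : h(y) ≥ h(x) + ⟪ξ, y − x⟫ ∀ y}`. -/
def subdiff {n : ℕ} (h : EuclideanSpace ℝ (Fin n) → ℝ) (x : EuclideanSpace ℝ (Fin n)) :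
    Set (EuclideanSpace ℝ (Fin n)) :=
  {ξ | ∀ y, h x + ⟪ξ, y - x⟫ ≤ h y}

/-- `σ`-strong convexity: `f(αx+(1−α)y) ≤ αf(x)+(1−α)f(y) − (σ/2)α(1−α)‖x−y‖²`. -/
def StronglyConvexFun {n : ℕ} (σ : ℝ) (f : EuclideanSpace ℝ (Fin n) → ℝ) : Prop :=
  ∀ x y : EuclideanSpace ℝ (Fin n), ∀ α : ℝ, 0 ≤ α → α ≤ 1 →
    f (α • x + (1 - α) • y) ≤ α * f x + (1 - α) * f y - σ / 2 * α * (1 - α) * ‖x - y‖ ^ 2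

/-- `Q_j(x,d) = ∇f_j(x)ᵀd + ½ dᵀ∇²f_j(x)d + g_j(x+d) − g_j(x)`, where the Hessian is
the Fréchet derivative of the gradient. -/
def Qj {n m : ℕ} (f g : Fin (m + 1) → EuclideanSpace ℝ (Fin n) → ℝ)
    (j : Fin (m + 1)) (x d : EuclideanSpace ℝ (Fin n)) : ℝ :=
  ⟪gradient (f j) x, d⟫ + (1 / 2) * ⟪(fderiv ℝ (gradient (f j)) x) d, d⟫
    + g j (x + d) - g j x

/-- `Q(x,d) = max_{1 ≤ j ≤ m} Q_j(x,d)`. -/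
def Qmax {n m : ℕ} (f g : Fin (m + 1) → EuclideanSpace ℝ (Fin n) → ℝ)
    (x d : EuclideanSpace ℝ (Fin n)) : ℝ :=
  Finset.univ.sup' Finset.univ_nonempty (fun j => Qj f g j x d)

lemma mono_deriv_nonneg {v : ℝ → ℝ} {c : ℝ} (hm : Monotone v) (hv : HasDerivAt v c 0) :
    0 ≤ c := by
  have h1 : Tendsto (slope v 0) (𝓝[>] 0) (𝓝 c) :=
    (hasDerivAt_iff_tendsto_slope.1 hv).mono_left
      (nhdsWithin_mono 0 fun t ht => ne_of_gt ht)
  refine ge_of_tendsto h1 ?_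
  filter_upwards [self_mem_nhdsWithin] with t ht
  have ht' : (0:ℝ) < t := ht
  have hvt : v 0 ≤ v t := hm ht'.le
  have : slope v 0 t = (v t - v 0) / (t - 0) := by simp [slope_def_field]
  rw [this]
  apply div_nonneg <;> linarith

lemma hess_lb {n : ℕ} {σ : ℝ} {f : EuclideanSpace ℝ (Fin n) → ℝ}
    (hsc : StronglyConvexFun σ f) (hf : ContDiff ℝ 2 f)
    (x d : EuclideanSpace ℝ (Fin n)) :
    σ * ‖d‖ ^ 2 ≤ ⟪(fderiv ℝ (gradient f) x) d, d⟫ := by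
  have hgrad : ContDiff ℝ 1 (gradient f) := by
    have h1 : ContDiff ℝ 1 (fderiv ℝ f) := hf.fderiv_right (by norm_num)
    exact ((InnerProductSpace.toDual ℝ _).symm.contDiff.comp h1)
  have hfd : Differentiable ℝ f := hf.differentiable (by norm_num)
  have hc : ∀ t : ℝ, HasDerivAt (fun t : ℝ => x + t • d) d t := by
    intro t
    simpa using ((hasDerivAt_id t).smul_const d).const_add x
  set u : ℝ → ℝ := fun t => ⟪gradient f (x + t • d), d⟫ with hu_def
  have hψ : ∀ t : ℝ, HasDerivAt (fun t : ℝ => f (x + t • d)) (u t) t := by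
    intro t
    have hg : HasGradientAt f (gradient f (x + t • d)) (x + t • d) :=
      (hfd (x + t • d)).hasGradientAt
    have hfderiv := hasGradientAt_iff_hasFDerivAt.1 hg
    have := hfderiv.comp_hasDerivAt t (hc t)
    simpa [hu_def, InnerProductSpace.toDual_apply_apply, Function.comp_def] using this
  set c : ℝ := ⟪(fderiv ℝ (gradient f) x) d, d⟫ with hc_def
  have hu : HasDerivAt u c 0 := by
    have hg0 : HasFDerivAt (gradient f) (fderiv ℝ (gradient f) x) (x + (0:ℝ) • d) := by
      simpa using ((hgrad.differentiable (by norm_num)) x).hasFDerivAt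
    have h1 : HasDerivAt (fun t : ℝ => gradient f (x + t • d))
        ((fderiv ℝ (gradient f) x) d) 0 := by
        have := hg0.comp_hasDerivAt 0 (hc 0)
        simpa [Function.comp_def] using this
    have := h1.inner ℝ (hasDerivAt_const (0:ℝ) d)
    simpa [hc_def, hu_def] using this
  set ψc : ℝ → ℝ := fun t => f (x + t • d) - σ/2 * ‖d‖^2 * t^2 with hψc_def
  have hψc : ∀ t : ℝ, HasDerivAt ψc (u t - σ * ‖d‖^2 * t) t := by
    intro t
    have h2 : HasDerivAt (fun t : ℝ => σ/2 * ‖d‖^2 * t^2) (σ * ‖d‖^2 * t) t := by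
      have := (hasDerivAt_pow 2 t).const_mul (σ/2 * ‖d‖^2)
      refine this.congr_deriv ?_
      rw [show (2:ℕ) - 1 = 1 from rfl]
      push_cast
      ring
    exact (hψ t).sub h2
  have hconv : ConvexOn ℝ Set.univ ψc := by
    refine ⟨convex_univ, ?_⟩
    intro s _ r _ a b ha hb hab
    have hb' : b = 1 - a := by linarith
    subst hb'
    have key := hsc (x + s • d) (x + r • d) a ha (by linarith)
    have hpt : a • (x + s • d) + (1 - a) • (x + r • d) = x + (a * s + (1-a) * r) • d := by
      module
    have hdiff : (x + s • d) - (x + r • d) = (s - r) • d := by module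
    rw [hpt, hdiff, norm_smul] at key
    simp only [Real.norm_eq_abs, mul_pow, sq_abs] at key
    simp only [hψc_def, smul_eq_mul]
    nlinarith [key, sq_nonneg (s - r), sq_nonneg ‖d‖]
  have hmono : Monotone (deriv ψc) := by
    have h := hconv.monotoneOn_deriv (fun y _ => (hψc y).differentiableAt)
    intro a b hab
    exact h (Set.mem_univ a) (Set.mem_univ b) hab
  have hderiv_eq : deriv ψc = fun t => u t - σ * ‖d‖^2 * t :=
    funext fun t => (hψc t).deriv
  have hv : HasDerivAt (deriv ψc) (c - σ * ‖d‖^2) 0 := by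
    rw [hderiv_eq]
    have h2 : HasDerivAt (fun t : ℝ => σ * ‖d‖^2 * t) (σ * ‖d‖^2) 0 := by
      simpa using (hasDerivAt_id (0:ℝ)).const_mul (σ * ‖d‖^2)
    exact hu.sub h2
  have := mono_deriv_nonneg hmono hv
  linarith

lemma tk_le {n m : ℕ} {σ : ℝ} (hσ : 0 < σ)
    (f g : Fin (m + 1) → EuclideanSpace ℝ (Fin n) → ℝ)
    (hfsc : ∀ j, StronglyConvexFun σ (f j))
    (hfC2 : ∀ j, ContDiff ℝ 2 (f j))
    (hgconv : ∀ j, ConvexOn ℝ Set.univ (g j))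
    (x dm : EuclideanSpace ℝ (Fin n))
    (hmin : ∀ d, Qmax f g x dm ≤ Qmax f g x d) :
    Qmax f g x dm ≤ -(σ/2) * ‖dm‖^2 := by
  set t := Qmax f g x dm with ht_def
  have hstep : ∀ α : ℝ, 0 < α → α < 1 → t ≤ -α * (σ/2) * ‖dm‖^2 := by
    intro α hα0 hα1
    have hQj : ∀ j, Qj f g j x (α • dm) ≤ α * Qj f g j x dm - α*(1-α)*(σ/2)*‖dm‖^2 := by
      intro j
      have hg' : g j (x + α • dm) ≤ α * g j (x + dm) + (1-α) * g j x := by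
        have h := (hgconv j).2 (Set.mem_univ (x + dm)) (Set.mem_univ x)
          hα0.le (by linarith : (0:ℝ) ≤ 1 - α) (by ring)
        have hpt : α • (x + dm) + (1-α) • x = x + α • dm := by module
        rw [hpt] at h
        simpa [smul_eq_mul] using h
      have hhess := hess_lb (hfsc j) (hfC2 j) x dm
      simp only [Qj, map_smul, real_inner_smul_right, real_inner_smul_left, smul_eq_mul]
      nlinarith [hg', mul_nonneg (mul_nonneg hα0.le (by linarith : (0:ℝ) ≤ 1 - α))
        (sub_nonneg.2 hhess)]
    have hQmax_le : Qmax f g x (α • dm) ≤ α * t - α*(1-α)*(σ/2)*‖dm‖^2 := by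
      apply Finset.sup'_le
      intro j _
      refine (hQj j).trans ?_
      have hj : Qj f g j x dm ≤ t :=
        Finset.le_sup' (fun j => Qj f g j x dm) (Finset.mem_univ j)
      have := mul_le_mul_of_nonneg_left hj hα0.le
      linarith
    have h2 : t ≤ α * t - α*(1-α)*(σ/2)*‖dm‖^2 := (hmin _).trans hQmax_le
    have h3 : (1-α) * t ≤ (1-α) * (-α * (σ/2) * ‖dm‖^2) := by nlinarith
    exact le_of_mul_le_mul_left h3 (by linarith)
  have hlim : Tendsto (fun α : ℝ => -α * (σ/2) * ‖dm‖^2) (𝓝[<] (1:ℝ))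
      (𝓝 (-(σ/2) * ‖dm‖^2)) := by
    have hc0 : Continuous (fun α : ℝ => -α * (σ/2) * ‖dm‖^2) := by continuity
    have hcont : Tendsto (fun α : ℝ => -α * (σ/2) * ‖dm‖^2) (𝓝 (1:ℝ))
        (𝓝 (-(1:ℝ) * (σ/2) * ‖dm‖^2)) := hc0.tendsto 1
    have h2 := hcont.mono_left (nhdsWithin_le_nhds (s := Set.Iio (1:ℝ)))
    simpa using h2
  refine ge_of_tendsto hlim ?_
  filter_upwards [self_mem_nhdsWithin,
    (eventually_gt_nhds zero_lt_one).filter_mono nhdsWithin_le_nhds] with α hα1 hα0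
  exact hstep α hα0 hα1

/-- for the iteration `x^{k+1} = x^k + α_k d^k` with `d^k` the unique global
minimizer of `d ↦ Q(x^k,d)`, `t^k = Q(x^k,d^k)`, step lengths `α_k ∈ [ᾱ,1]` (`ᾱ > 0`) and
Armijo decrease `F_j(x^{k+1}) ≤ F_j(x^k) + β α_k t^k` (`β ∈ (0,1)`), if each `f_j` is
`σ`-strongly convex and each `F_j = f_j + g_j` is bounded below on the level set
`M = {x : F_j(x) ≤ F_j(x^0) ∀ j}`, then `Σ_k ‖d^k‖² < ∞`, so `d^k → 0`. -/
theorem sum_sq_directions_finite {n m : ℕ} (σ : ℝ) (hσ : 0 < σ)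
    (β : ℝ) (hβ0 : 0 < β) (hβ1 : β < 1)
    (f g F : Fin (m + 1) → EuclideanSpace ℝ (Fin n) → ℝ)
    (hfsc : ∀ j, StronglyConvexFun σ (f j))
    (hfC2 : ∀ j, ContDiff ℝ 2 (f j))
    (hgconv : ∀ j, ConvexOn ℝ Set.univ (g j))
    (hgcont : ∀ j, Continuous (g j))
    (hF : ∀ j y, F j y = f j y + g j y)
    (xseq dseq : ℕ → EuclideanSpace ℝ (Fin n)) (tseq alphaseq : ℕ → ℝ)
    (abar : ℝ) (habar : 0 < abar)
    (hdmin : ∀ k d, Qmax f g (xseq k) (dseq k) ≤ Qmax f g (xseq k) d)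
    (hduniq : ∀ k d, (∀ d', Qmax f g (xseq k) d ≤ Qmax f g (xseq k) d') → d = dseq k)
    (ht : ∀ k, tseq k = Qmax f g (xseq k) (dseq k))
    (halpha : ∀ k, abar ≤ alphaseq k ∧ alphaseq k ≤ 1)
    (hupd : ∀ k, xseq (k + 1) = xseq k + alphaseq k • dseq k)
    (harmijo : ∀ k j, F j (xseq (k + 1)) ≤ F j (xseq k) + β * alphaseq k * tseq k)
    (hbdd : ∀ j, ∃ B : ℝ, ∀ x : EuclideanSpace ℝ (Fin n),
      (∀ i, F i x ≤ F i (xseq 0)) → B ≤ F j x) :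
    Summable (fun k => ‖dseq k‖ ^ 2) ∧ Tendsto dseq atTop (nhds 0) := by
  -- key bound on tseq
  have htk : ∀ k, tseq k ≤ -(σ/2) * ‖dseq k‖^2 := by
    intro k
    rw [ht k]
    exact tk_le hσ f g hfsc hfC2 hgconv (xseq k) (dseq k) (hdmin k)
  have htk0 : ∀ k, tseq k ≤ 0 := fun k =>
    (htk k).trans (by nlinarith [sq_nonneg ‖dseq k‖])
  have halpha0 : ∀ k, 0 < alphaseq k := fun k => lt_of_lt_of_le habar (halpha k).1
  -- decrease
  have hdec : ∀ j k, F j (xseq (k + 1)) ≤ F j (xseq k) := by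
    intro j k
    have h := harmijo k j
    have : β * alphaseq k * tseq k ≤ 0 :=
      mul_nonpos_of_nonneg_of_nonpos (mul_pos hβ0 (halpha0 k)).le (htk0 k)
    linarith
  have hanti : ∀ j, Antitone (fun k => F j (xseq k)) := fun j =>
    antitone_nat_of_succ_le (hdec j)
  obtain ⟨B, hB⟩ := hbdd 0
  have hBk : ∀ k, B ≤ F 0 (xseq k) := fun k =>
    hB (xseq k) (fun i => hanti i (Nat.zero_le k))
  -- partial sums bound
  set C : ℝ := (F 0 (xseq 0) - B) / (β * abar * (σ/2)) with hC_def
  have hsum_le : ∀ N, ∑ k ∈ Finset.range N, ‖dseq k‖^2 ≤ C := by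
    intro N
    have htel : ∑ k ∈ Finset.range N, (F 0 (xseq k) - F 0 (xseq (k+1)))
        = F 0 (xseq 0) - F 0 (xseq N) := by
      rw [← Finset.sum_range_sub' (fun k => F 0 (xseq k)) N]
    have hterm : ∀ k, β * abar * (σ/2) * ‖dseq k‖^2
        ≤ F 0 (xseq k) - F 0 (xseq (k+1)) := by
      intro k
      have h := harmijo k 0
      have h1 : β * alphaseq k * (-(tseq k)) ≤ F 0 (xseq k) - F 0 (xseq (k+1)) := by
        linarith
      have h2 : (σ/2) * ‖dseq k‖^2 ≤ -(tseq k) := by linarith [htk k]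
      have h3 : β * abar * ((σ/2) * ‖dseq k‖^2) ≤ β * alphaseq k * (-(tseq k)) := by
        apply mul_le_mul
        · apply mul_le_mul_of_nonneg_left (halpha k).1 hβ0.le
        · exact h2
        · positivity
        · exact (mul_pos hβ0 (halpha0 k)).le
      nlinarith [h3, h1]
    have hsum1 : ∑ k ∈ Finset.range N, β * abar * (σ/2) * ‖dseq k‖^2
        ≤ F 0 (xseq 0) - F 0 (xseq N) := by
      rw [← htel]
      exact Finset.sum_le_sum fun k _ => hterm k
    have hFN : B ≤ F 0 (xseq N) := hBk N
    have hpos : 0 < β * abar * (σ/2) := by positivity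
    rw [← Finset.mul_sum] at hsum1
    rw [hC_def, le_div_iff₀ hpos]
    linarith [hsum1]
  have hsummable : Summable (fun k => ‖dseq k‖ ^ 2) :=
    summable_of_sum_range_le (fun k => sq_nonneg _) hsum_le
  refine ⟨hsummable, ?_⟩
  have h0 : Tendsto (fun k => ‖dseq k‖ ^ 2) atTop (𝓝 0) := hsummable.tendsto_atTop_zero
  have h1 : Tendsto (fun k => ‖dseq k‖) atTop (𝓝 0) := by
    have h2 := (Real.continuous_sqrt.tendsto 0).comp h0
    have heq : ((fun x => Real.sqrt x) ∘ fun k => ‖dseq k‖ ^ 2) = fun k => ‖dseq k‖ :=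
      funext fun k => Real.sqrt_sq (norm_nonneg _)
    rw [heq] at h2
    simpa using h2
  exact tendsto_zero_iff_norm_tendsto_zero.mpr h1
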